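/- Let A be a discrete valuation ring with fraction field F and residue field k, let v : F^× → ℤ be the normalized discrete valuation, and let q ≥ 1. Then for any two uniformizers π and π' of A, the rational exterior-power tame symbols coincide: ∂_π = ∂_{π'} as ℚ-linear maps ⋀^q (F^× ⊗_ℤ ℚ) → ⋀^{q−1} (k^× ⊗_ℤ ℚ). -/

import Mathlib

open scoped TensorProduct

/-- The wedge `f 0 ∧ ⋯ ∧ f (q-1)` as an element of the `q`-th exterior power
of a `ℚ`-vector space. -/
noncomputable def wedge {M : Type*} [AddCommGroup M] [Module ℚ M] (q : ℕ) (f : Fin q → M) :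
    ⋀[ℚ]^q M :=
  ⟨ExteriorAlgebra.ιMulti ℚ q f, ExteriorAlgebra.ιMulti_range ℚ q ⟨f, rfl⟩⟩

/-- The canonical map `B → B ⊗_ℤ ℚ` from a multiplicative abelian group `B` to its
rationalization, realized as `b ↦ 1 ⊗ b : ℚ ⊗[ℤ] Additive B`. -/
noncomputable def ratUnit {B : Type*} [CommGroup B] (b : B) : ℚ ⊗[ℤ] Additive B :=
  (1 : ℚ) ⊗ₜ[ℤ] Additive.ofMul b

section contraction

variable {V : Type*} [AddCommGroup V] [Module ℚ V]

/-- Contraction of a `ιMulti` element: the Leibniz expansion. -/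
lemma contract_iMulti (φ : Module.Dual ℚ V) :
    ∀ (n : ℕ) (x : Fin (n + 1) → V),
      CliffordAlgebra.contractLeft (Q := (0 : QuadraticForm ℚ V)) φ
          (ExteriorAlgebra.ιMulti ℚ (n + 1) x) =
        ∑ i : Fin (n + 1), ((-1 : ℚ) ^ (i : ℕ) * φ (x i)) •
          ExteriorAlgebra.ιMulti ℚ n (x ∘ i.succAbove) := by
  intro n
  induction n with
  | zero =>
    intro x
    rw [ExteriorAlgebra.ιMulti_succ_apply, ExteriorAlgebra.ιMulti_zero_apply,
      CliffordAlgebra.contractLeft_ι_mul]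
    simp
  | succ n ih =>
    intro x
    rw [ExteriorAlgebra.ιMulti_succ_apply, CliffordAlgebra.contractLeft_ι_mul,
      ih (Matrix.vecTail x)]
    conv_rhs => rw [Fin.sum_univ_succ]
    have h0 : x ∘ (0 : Fin (n + 2)).succAbove = Matrix.vecTail x := by
      funext j; simp [Matrix.vecTail, Fin.succAbove_zero, Function.comp]
    have hstep : ∀ i : Fin (n + 1),
        ExteriorAlgebra.ιMulti ℚ (n + 1) (x ∘ (i.succ).succAbove) =
          ExteriorAlgebra.ι ℚ (x 0) *
            ExteriorAlgebra.ιMulti ℚ n (Matrix.vecTail x ∘ i.succAbove) := by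
      intro i
      rw [ExteriorAlgebra.ιMulti_succ_apply]
      have h1 : (x ∘ (i.succ).succAbove) 0 = x 0 := by
        simp [Function.comp, Fin.succ_succAbove_zero]
      have h2 : Matrix.vecTail (x ∘ (i.succ).succAbove) = Matrix.vecTail x ∘ i.succAbove := by
        funext j
        simp [Matrix.vecTail, Function.comp, Fin.succ_succAbove_succ]
      rw [h1, h2]
    rw [h0]
    simp only [hstep, Fin.val_zero, pow_zero, one_mul, Fin.val_succ, pow_succ,
      Matrix.vecTail, Function.comp, mul_smul_comm]
    rw [Finset.mul_sum, sub_eq_add_neg, ← Finset.sum_neg_distrib]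
    congr 1
    apply Finset.sum_congr rfl
    intro i _
    rw [mul_smul_comm, ← neg_smul]
    congr 1
    ring

/-- The transvection identity: applying `z ↦ z + φ(z) • y` (with `φ y = 0`) to each slot of a
wedge adds `ι y * (φ ⌋ wedge)`. -/
lemma iMulti_transvection (φ : Module.Dual ℚ V) (y : V) (hy : φ y = 0) :
    ∀ (n : ℕ) (x : Fin n → V),
      ExteriorAlgebra.ιMulti ℚ n (fun i => x i + φ (x i) • y) =
        ExteriorAlgebra.ιMulti ℚ n x +
          ExteriorAlgebra.ι ℚ y *
            CliffordAlgebra.contractLeft (Q := (0 : QuadraticForm ℚ V)) φ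
              (ExteriorAlgebra.ιMulti ℚ n x) := by
  intro n
  induction n with
  | zero =>
    intro x
    rw [ExteriorAlgebra.ιMulti_zero_apply, ExteriorAlgebra.ιMulti_zero_apply,
      CliffordAlgebra.contractLeft_one]
    simp
  | succ n ih =>
    intro x
    rw [ExteriorAlgebra.ιMulti_succ_apply, ExteriorAlgebra.ιMulti_succ_apply (v := x)]
    have htail : Matrix.vecTail (fun i => x i + φ (x i) • y) =
        fun i => Matrix.vecTail x i + φ (Matrix.vecTail x i) • y := by
      funext j; simp [Matrix.vecTail, Function.comp]
    rw [htail, ih (Matrix.vecTail x)]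
    rw [CliffordAlgebra.contractLeft_ι_mul]
    set M := ExteriorAlgebra.ιMulti ℚ n (Matrix.vecTail x) with hM
    set C := CliffordAlgebra.contractLeft (Q := (0 : QuadraticForm ℚ V)) φ M with hC
    have hanti : ExteriorAlgebra.ι ℚ (x 0) * (ExteriorAlgebra.ι ℚ y * C) =
        -(ExteriorAlgebra.ι ℚ y * (ExteriorAlgebra.ι ℚ (x 0) * C)) := by
      have := ExteriorAlgebra.ι_add_mul_swap (R := ℚ) (x 0) y
      rw [← mul_assoc, ← mul_assoc]
      rw [eq_comm, neg_eq_iff_add_eq_zero, ← add_mul]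
      rw [add_comm] at this
      rw [this, zero_mul]
    have hyy : ExteriorAlgebra.ι ℚ y * (φ (x 0) • (ExteriorAlgebra.ι ℚ y * C)) = 0 := by
      rw [mul_smul_comm, ← mul_assoc, ExteriorAlgebra.ι_sq_zero, zero_mul, smul_zero]
    rw [map_add, map_smul, add_mul, mul_add, smul_mul_assoc, mul_add, smul_add,
      ← mul_assoc (ExteriorAlgebra.ι ℚ y), ExteriorAlgebra.ι_sq_zero, zero_mul,
      smul_zero, add_zero, hanti, mul_sub, mul_smul_comm]
    abel

end contraction

/-- The key combinatorial identity: the tame-symbol sum is unchanged when each `e i` is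
translated by `c i • W`. -/
lemma key_identity {K : Type*} [AddCommGroup K] [Module ℚ K] (n : ℕ)
    (c : Fin (n + 1) → ℚ) (e : Fin (n + 1) → K) (W : K) :
    ∑ i : Fin (n + 1), ((-1 : ℚ) ^ (i : ℕ) * c i) •
        ExteriorAlgebra.ιMulti ℚ n (fun j => e (i.succAbove j) + c (i.succAbove j) • W) =
      ∑ i : Fin (n + 1), ((-1 : ℚ) ^ (i : ℕ) * c i) •
        ExteriorAlgebra.ιMulti ℚ n (fun j => e (i.succAbove j)) := by
  set φ : Module.Dual ℚ (ℚ × K) := LinearMap.fst ℚ ℚ K with hφ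
  set y : ℚ × K := (0, W) with hy
  set x' : Fin (n + 1) → ℚ × K := fun i => (c i, e i) with hx'
  set x : Fin (n + 1) → ℚ × K := fun i => (c i, e i + c i • W) with hxdef
  have hx : (fun i => x' i + φ (x' i) • y) = x := by
    funext i
    simp [hx', hy, hφ, hxdef, Prod.ext_iff]
  have hcontr :
      CliffordAlgebra.contractLeft (Q := (0 : QuadraticForm ℚ (ℚ × K))) φ
          (ExteriorAlgebra.ιMulti ℚ (n + 1) x) =
        CliffordAlgebra.contractLeft (Q := (0 : QuadraticForm ℚ (ℚ × K))) φ
          (ExteriorAlgebra.ιMulti ℚ (n + 1) x') := by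
    rw [← hx, iMulti_transvection φ y (by simp [hφ, hy]) (n + 1) x', map_add,
      CliffordAlgebra.contractLeft_ι_mul, CliffordAlgebra.contractLeft_contractLeft]
    simp [hφ, hy]
  rw [contract_iMulti, contract_iMulti] at hcontr
  have hmap := congrArg (ExteriorAlgebra.map (LinearMap.snd ℚ ℚ K)) hcontr
  rw [map_sum, map_sum] at hmap
  simp only [map_smul, ExteriorAlgebra.map_apply_ιMulti] at hmap
  exact hmap

lemma ratUnit_mul {B : Type*} [CommGroup B] (a b : B) :
    ratUnit (a * b) = ratUnit a + ratUnit b := by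
  unfold ratUnit
  rw [ofMul_mul, TensorProduct.tmul_add]

lemma ratUnit_zpow {B : Type*} [CommGroup B] (a : B) (m : ℤ) :
    ratUnit (a ^ m) = (m : ℚ) • ratUnit a := by
  unfold ratUnit
  rw [ofMul_zpow, TensorProduct.tmul_smul, Int.cast_smul_eq_zsmul]

lemma exists_smul_ratUnit {B : Type*} [CommGroup B] (x : ℚ ⊗[ℤ] Additive B) :
    ∃ (c : ℚ) (b : B), x = c • ratUnit b := by
  suffices h : ∃ (d : ℤ) (z : Additive B), d ≠ 0 ∧ (d : ℚ) • x = (1 : ℚ) ⊗ₜ[ℤ] z by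
    obtain ⟨d, z, hd, hz⟩ := h
    refine ⟨(d : ℚ)⁻¹, z.toMul, ?_⟩
    have hd' : ((d : ℚ)) ≠ 0 := Int.cast_ne_zero.2 hd
    have : ratUnit z.toMul = (1 : ℚ) ⊗ₜ[ℤ] z := rfl
    rw [this, ← hz, smul_smul, inv_mul_cancel₀ hd', one_smul]
  induction x using TensorProduct.induction_on with
  | zero => exact ⟨1, 0, one_ne_zero, by simp⟩
  | tmul r z =>
    refine ⟨(r.den : ℤ), r.num • z, Int.natCast_ne_zero.2 r.den_ne_zero, ?_⟩
    rw [TensorProduct.smul_tmul', smul_eq_mul, ← TensorProduct.smul_tmul]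
    congr 1
    rw [zsmul_eq_mul, mul_one]
    push_cast
    have hden : ((r.den : ℚ)) ≠ 0 := by exact_mod_cast r.den_ne_zero
    rw [mul_comm, ← eq_div_iff hden]
    exact (Rat.num_div_den r).symm
  | add u w hu hw =>
    obtain ⟨d1, z1, hd1, h1⟩ := hu
    obtain ⟨d2, z2, hd2, h2⟩ := hw
    refine ⟨d1 * d2, d2 • z1 + d1 • z2, mul_ne_zero hd1 hd2, ?_⟩
    rw [smul_add, Int.cast_mul]
    have e1 : ((d1 : ℚ) * (d2 : ℚ)) • u = (d2 : ℚ) • ((d1 : ℚ) • u) := by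
      rw [mul_comm, mul_smul]
    have e2 : ((d1 : ℚ) * (d2 : ℚ)) • w = (d1 : ℚ) • ((d2 : ℚ) • w) := mul_smul _ _ _
    rw [e1, e2, h1, h2, TensorProduct.tmul_add]
    congr 1
    · rw [← TensorProduct.smul_tmul, TensorProduct.smul_tmul']
      congr 1
    · rw [← TensorProduct.smul_tmul, TensorProduct.smul_tmul']
      congr 1

lemma wedge_span {M : Type*} [AddCommGroup M] [Module ℚ M] (q : ℕ) :
    Submodule.span ℚ (Set.range (wedge (M := M) q)) = ⊤ := by
  apply Submodule.map_injective_of_injective (Submodule.injective_subtype (⋀[ℚ]^q M))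
  rw [Submodule.map_span, Submodule.map_top, Submodule.range_subtype]
  have himg : (⋀[ℚ]^q M).subtype '' Set.range (wedge (M := M) q) =
      Set.range (ExteriorAlgebra.ιMulti ℚ q (M := M)) := by
    ext z
    constructor
    · rintro ⟨_, ⟨f, rfl⟩, rfl⟩; exact ⟨f, rfl⟩
    · rintro ⟨f, rfl⟩; exact ⟨wedge q f, ⟨f, rfl⟩, rfl⟩
  rw [himg, ExteriorAlgebra.ιMulti_span_fixedDegree]

lemma wedge_smul_univ {M : Type*} [AddCommGroup M] [Module ℚ M] (q : ℕ)
    (c : Fin q → ℚ) (f : Fin q → M) :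
    wedge q (fun i => c i • f i) = (∏ i, c i) • wedge q f := by
  rw [Subtype.ext_iff]
  show ExteriorAlgebra.ιMulti ℚ q (fun i => c i • f i) =
    ((∏ i, c i) • wedge q f : ⋀[ℚ]^q M)
  rw [SetLike.val_smul]
  exact ((ExteriorAlgebra.ιMulti ℚ q).toMultilinearMap).map_smul_univ c f

/-- `D` is the rational exterior-power tame symbol
`∂ : ⋀^{n+1}(F^×_ℚ) → ⋀^n(k^×_ℚ)` associated to the data of a valuation `v : F^× → ℤ` and a
unit-part map `ubar : F^× → k^×`, iff it takes the defining values
`∂(a₁ ∧ ⋯ ∧ a_q) = Σᵢ (−1)^{i−1} v(aᵢ) · ū_{a₁} ∧ ⋯ (omit i) ⋯ ∧ ū_{a_q}` on wedges of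
elements coming from `F^×`. -/
def IsTameSymbol {F k : Type*} [Field F] [Field k] (n : ℕ)
    (v : Fˣ → ℤ) (ubar : Fˣ → kˣ)
    (D : (⋀[ℚ]^(n + 1) (ℚ ⊗[ℤ] Additive Fˣ)) →ₗ[ℚ] (⋀[ℚ]^n (ℚ ⊗[ℤ] Additive kˣ))) : Prop :=
  ∀ a : Fin (n + 1) → Fˣ,
    D (wedge (n + 1) (fun i => ratUnit (a i))) =
      ∑ i : Fin (n + 1), ((-1 : ℚ) ^ (i : ℕ) * (v (a i) : ℚ)) •
        wedge n (fun j => ratUnit (ubar (a (i.succAbove j))))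

set_option synthInstance.maxHeartbeats 1000000 in
set_option maxHeartbeats 2000000 in
set_option maxRecDepth 4000 in
/-- for a discrete valuation ring `A` with fraction field `F` and residue
field `k`, normalized valuation `v`, and any two uniformizers `π`, `π'` of `A` (with
associated unit-part decompositions `a = u_a·π^{v(a)}`, resp. `a = u'_a·π'^{v(a)}`), the
rational exterior-power tame symbols associated to `π` and to `π'` coincide:
`∂_π = ∂_{π'}` as `ℚ`-linear maps `⋀^q(F^×_ℚ) → ⋀^{q−1}(k^×_ℚ)` (here `q = n + 1 ≥ 1`). -/
theorem statement_10
    (A : Type*) [CommRing A] [IsDomain A] [IsDiscreteValuationRing A]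
    (F : Type*) [Field F] [Algebra A F] [IsFractionRing A F]
    -- the normalized discrete valuation of `A` on `F`, as a function on `Fˣ`
    (v : Fˣ → ℤ)
    (hv_mul : ∀ a b : Fˣ, v (a * b) = v a + v b)
    (hv_unit : ∀ a : Fˣ, v a = 0 ↔ ∃ w : Aˣ, algebraMap A F (w : A) = (a : F))
    -- two uniformizers `π`, `π'` of `A`, with images `πF`, `πF'` in `Fˣ`
    (π π' : A) (hπ : Irreducible π) (hπ' : Irreducible π')
    (πF πF' : Fˣ) (hπF : (πF : F) = algebraMap A F π) (hπF' : (πF' : F) = algebraMap A F π')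
    (hvπ : v πF = 1) (hvπ' : v πF' = 1)
    -- the unit-part maps associated to `π` and `π'`
    (U U' : Fˣ → Aˣ)
    (hU : ∀ a : Fˣ, (a : F) = algebraMap A F (U a : A) * (πF : F) ^ (v a))
    (hU' : ∀ a : Fˣ, (a : F) = algebraMap A F (U' a : A) * (πF' : F) ^ (v a))
    (n : ℕ)
    (D D' : (⋀[ℚ]^(n + 1) (ℚ ⊗[ℤ] Additive Fˣ)) →ₗ[ℚ]
      (⋀[ℚ]^n (ℚ ⊗[ℤ] Additive (IsLocalRing.ResidueField A)ˣ)))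
    (hD : IsTameSymbol n v
      (fun a => Units.map (IsLocalRing.residue A).toMonoidHom (U a)) D)
    (hD' : IsTameSymbol n v
      (fun a => Units.map (IsLocalRing.residue A).toMonoidHom (U' a)) D') :
    D = D' := by
  classical
  set incl : Aˣ →* Fˣ := Units.map (algebraMap A F).toMonoidHom with hincl
  set res : Aˣ →* (IsLocalRing.ResidueField A)ˣ :=
    Units.map (IsLocalRing.residue A).toMonoidHom with hres
  have hinj : Function.Injective (algebraMap A F) := IsFractionRing.injective A F
  have hinclinj : Function.Injective incl := Units.map_injective hinj
  -- unit-level decompositions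
  have hUu : ∀ a : Fˣ, a = incl (U a) * πF ^ (v a) := by
    intro a
    apply Units.ext
    rw [Units.val_mul, Units.val_zpow_eq_zpow_val]
    exact hU a
  have hU'u : ∀ a : Fˣ, a = incl (U' a) * πF' ^ (v a) := by
    intro a
    apply Units.ext
    rw [Units.val_mul, Units.val_zpow_eq_zpow_val]
    exact hU' a
  set w : Aˣ := U πF' with hwdef
  have hw : πF' = incl w * πF := by
    have h := hUu πF'
    rwa [hvπ', zpow_one] at h
  have hrel : ∀ a : Fˣ, U a = U' a * w ^ (v a) := by
    intro a
    apply hinclinj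
    rw [map_mul, map_zpow]
    have h1 := (hUu a).symm
    have h2 := hU'u a
    rw [hw, mul_zpow] at h2
    have h3 : incl (U a) * πF ^ (v a) = incl (U' a) * ((incl w) ^ (v a) * πF ^ (v a)) :=
      h1.trans h2
    rw [← mul_assoc] at h3
    exact mul_right_cancel h3
  have hresrel : ∀ a : Fˣ,
      ratUnit (res (U a)) = ratUnit (res (U' a)) + (v a : ℚ) • ratUnit (res w) := by
    intro a
    rw [hrel a, map_mul, map_zpow, ratUnit_mul, ratUnit_zpow]
  -- D and D' agree on pure wedges
  have hwedge : ∀ b : Fin (n + 1) → Fˣ,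
      D (wedge (n + 1) (fun i => ratUnit (b i))) =
        D' (wedge (n + 1) (fun i => ratUnit (b i))) := by
    intro b
    rw [hD b, hD' b]
    have hKEY := key_identity n (fun m : Fin (n + 1) => (v (b m) : ℚ))
      (fun m => ratUnit (res (U' (b m)))) (ratUnit (res w))
    rw [Subtype.ext_iff]
    rw [Submodule.coe_sum, Submodule.coe_sum]
    simp only [SetLike.val_smul]
    show (∑ i : Fin (n + 1), ((-1 : ℚ) ^ (i : ℕ) * (v (b i) : ℚ)) •
        ExteriorAlgebra.ιMulti ℚ n (fun j => ratUnit (res (U (b (i.succAbove j)))))) =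
      ∑ i : Fin (n + 1), ((-1 : ℚ) ^ (i : ℕ) * (v (b i) : ℚ)) •
        ExteriorAlgebra.ιMulti ℚ n (fun j => ratUnit (res (U' (b (i.succAbove j)))))
    have hfun : ∀ i : Fin (n + 1),
        (fun j => ratUnit (res (U (b (i.succAbove j))))) =
          fun j : Fin n => ratUnit (res (U' (b (i.succAbove j)))) +
            (v (b (i.succAbove j)) : ℚ) • ratUnit (res w) := by
      intro i
      funext j
      exact hresrel _
    refine Eq.trans (Finset.sum_congr rfl fun i _ => ?_) hKEY
    rw [hfun i]
  -- conclude by spanning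
  apply LinearMap.ext_on (wedge_span (n + 1))
  rintro x ⟨f, rfl⟩
  choose c b hcb using fun i => exists_smul_ratUnit (f i)
  have hf : wedge (n + 1) f = (∏ i, c i) • wedge (n + 1) (fun i => ratUnit (b i)) := by
    rw [← wedge_smul_univ]
    congr 1
    funext i
    exact hcb i
  rw [hf, map_smul, map_smul, hwedge b]
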